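/- Let A=(C,m) be a 3-dimensional toric idealistic cluster and let Q_i be a node of C having exactly one child, Q_k. Then m_i·m_k ≥ Σ_{j→i} m_j² (the sum over all nodes Q_j proximate to Q_i). -/

import Mathlib

open Finset

/-!
Common framework: 3-dimensional toric constellations and toric idealistic clusters.
The edge labels `1, 2, 3` of the paper are encoded as `0, 1, 2 : Fin 3`.
-/

/-- A 3-dimensional toric constellation: a finite rooted tree on nodes `0, …, r−1`
(node `0` the root, every child having larger index than its parent), each node having
at most three children, the edges from a node to its children carrying pairwise
distinct labels in `Fin 3`.  `label j` is the label of the edge from `parent j` to `j`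
(irrelevant for the root). -/
structure ToricConstellation (r : ℕ) where
  parent : Fin r → Fin r
  label : Fin r → Fin 3
  parent_lt : ∀ i : Fin r, 0 < (i : ℕ) → (parent i : ℕ) < (i : ℕ)
  parent_root : ∀ i : Fin r, (i : ℕ) = 0 → parent i = i
  label_distinct : ∀ i j : Fin r, 0 < (i : ℕ) → 0 < (j : ℕ) → i ≠ j →
    parent i = parent j → label i ≠ label j

namespace ToricConstellation

variable {r : ℕ}

/-- The ordered triple of vectors of `ℤ³` attached to a node: the root carries the
standard basis, and the child along the edge labelled `a` of a node with cone
`(u₁,u₂,u₃)` carries the triple obtained by replacing `u_a` with `u₁+u₂+u₃`. -/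
def cone (C : ToricConstellation r) (i : Fin r) : Fin 3 → (Fin 3 → ℤ) :=
  if h : 0 < (i : ℕ) then
    Function.update (cone C (C.parent i)) (C.label i) (∑ a, cone C (C.parent i) a)
  else fun a => Pi.single a 1
termination_by (i : ℕ)
decreasing_by all_goals exact C.parent_lt i h

/-- `v(Q) = u₁ + u₂ + u₃`, the sum of the cone vectors of a node. -/
def v (C : ToricConstellation r) (i : Fin r) : Fin 3 → ℤ := ∑ a, cone C i a

/-- `Prox C j i` means `j → i`, i.e. `Q_j` is proximate to `Q_i`:
`j ≠ i` and `v(Q_i)` is an entry of `cone(Q_j)`. -/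
def Prox (C : ToricConstellation r) (j i : Fin r) : Prop :=
  j ≠ i ∧ ∃ a : Fin 3, cone C j a = v C i

instance (C : ToricConstellation r) (j i : Fin r) : Decidable (C.Prox j i) := by
  unfold Prox; infer_instance

/-- `inChain C i a b j = true` iff `j = Q_i(a, b^t)` for some `t ≥ 0`, i.e. `j` is
reached from `i` by one edge labelled `a` followed by `t` edges labelled `b`. -/
def inChain (C : ToricConstellation r) (i : Fin r) (a b : Fin 3) (j : Fin r) : Bool :=
  if h : 0 < (j : ℕ) then
    (decide (C.parent j = i) && decide (C.label j = a)) ||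
      (decide (C.label j = b) && inChain C i a b (C.parent j))
  else false
termination_by (j : ℕ)
decreasing_by exact C.parent_lt j h

/-- `LinProx C j i` means `j ↠ i`, i.e. `Q_j` is linearly proximate to `Q_i`. -/
def LinProx (C : ToricConstellation r) (j i : Fin r) : Prop :=
  ∃ a b : Fin 3, a ≠ b ∧ inChain C i a b j = true

instance (C : ToricConstellation r) (j i : Fin r) : Decidable (C.LinProx j i) := by
  unfold LinProx; infer_instance

/-- `j` is a child of `i`. -/
def IsChild (C : ToricConstellation r) (j i : Fin r) : Prop :=
  0 < (j : ℕ) ∧ C.parent j = i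

instance (C : ToricConstellation r) (j i : Fin r) : Decidable (C.IsChild j i) := by
  unfold IsChild; infer_instance

/-- The set `S_i` of labels of the edges on the path from the root to `Q_i`. -/
def labelsUnder (C : ToricConstellation r) (i : Fin r) : Finset (Fin 3) :=
  if h : 0 < (i : ℕ) then insert (C.label i) (labelsUnder C (C.parent i)) else ∅
termination_by (i : ℕ)
decreasing_by exact C.parent_lt i h

/-- `i` is a weak ancestor of `j` (`i = j` or `i` a strict ancestor of `j`). -/
def anc (C : ToricConstellation r) (i j : Fin r) : Bool :=
  decide (i = j) || (if h : 0 < (j : ℕ) then anc C i (C.parent j) else false)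
termination_by (j : ℕ)
decreasing_by exact C.parent_lt j h

/-- The set of nodes weakly above `i` (`i` together with its descendants). -/
def weakAbove (C : ToricConstellation r) (i : Fin r) : Finset (Fin r) :=
  univ.filter (fun j => anc C i j = true)

end ToricConstellation

/-- A 3-dimensional toric cluster: a toric constellation together with a positive
integer weight for each node. -/
structure ToricCluster (r : ℕ) extends ToricConstellation r where
  m : Fin r → ℤ
  m_pos : ∀ j, 0 < m j

namespace ToricCluster

open ToricConstellation

variable {r : ℕ}

/-- `M_{Q_i}(a,b) := Σ_{t ≥ 0, Q_i(a,b^t) ∈ C} m_{Q_i(a,b^t)}`. -/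
def M (A : ToricCluster r) (i : Fin r) (a b : Fin 3) : ℤ :=
  ∑ j ∈ univ.filter (fun j => inChain A.toToricConstellation i a b j = true), A.m j

/-- The cluster is idealistic: the linear proximity inequalities
`M_{Q_i}(a,b) + M_{Q_i}(b,a) ≤ m_{Q_i}` hold. -/
def Idealistic (A : ToricCluster r) : Prop :=
  ∀ i : Fin r, ∀ a b : Fin 3, a ≠ b → A.M i a b + A.M i b a ≤ A.m i

/-- The set of nodes `j` proximate to `i` (`j → i`). -/
def proxSet (A : ToricCluster r) (i : Fin r) : Finset (Fin r) :=
  univ.filter (fun j => Prox A.toToricConstellation j i)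

/-- `B_i`: the set of nodes to which `i` is proximate. -/
def Bset (A : ToricCluster r) (i : Fin r) : Finset (Fin r) :=
  univ.filter (fun j => Prox A.toToricConstellation i j)

/-- `A_i`: the children `k` of `i` for which there is no `l` with `i → l` and `k → l`. -/
def Aset (A : ToricCluster r) (i : Fin r) : Finset (Fin r) :=
  univ.filter (fun k => IsChild A.toToricConstellation k i ∧
    ¬ ∃ l, Prox A.toToricConstellation i l ∧ Prox A.toToricConstellation k l)

/-- The Euler characteristic `χ_i = χ(E_i°)`. -/
def chi (A : ToricCluster r) (i : Fin r) : ℤ :=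
  3 + A.m i * (A.m i - 3)
    - ∑ j ∈ A.proxSet i, A.m j * (A.m j - 1)
    + ∑ j ∈ A.proxSet i,
        (A.m j - ∑ k ∈ (A.proxSet i).filter
          (fun k => LinProx A.toToricConstellation k j), A.m k)
    + ∑ j ∈ A.Bset i,
        (A.m i - ∑ k ∈ (A.proxSet j).filter
          (fun k => LinProx A.toToricConstellation k i), A.m k)
    - ((A.Aset i).card : ℤ) - 2 * ((A.Bset i).card : ℤ)
    + (((A.Bset i).card.choose 2 : ℕ) : ℤ)

/-- `D_i = m_i² − Σ_{j→i} m_j²`. -/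
def D (A : ToricCluster r) (i : Fin r) : ℤ :=
  A.m i ^ 2 - ∑ j ∈ A.proxSet i, A.m j ^ 2

/-- `r_{ab} = m_i − M_{Q_i}(a,b) − M_{Q_i}(b,a)`. -/
def rab (A : ToricCluster r) (i : Fin r) (a b : Fin 3) : ℤ :=
  A.m i - A.M i a b - A.M i b a

/-- `R_i = r̂_{12} + r̂_{13} + r̂_{23}`, where `r̂_{ab} = r_{ab}` if the remaining third
label does not appear under `Q_i`, and `r̂_{ab} = 0` otherwise.  (Labels `1,2,3` are
encoded as `0,1,2 : Fin 3`.) -/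
def R (A : ToricCluster r) (i : Fin r) : ℤ :=
  (if (2 : Fin 3) ∉ labelsUnder A.toToricConstellation i then A.rab i 0 1 else 0)
  + (if (1 : Fin 3) ∉ labelsUnder A.toToricConstellation i then A.rab i 0 2 else 0)
  + (if (0 : Fin 3) ∉ labelsUnder A.toToricConstellation i then A.rab i 1 2 else 0)

/-- `T_i = 3 − #A_i − 2·#B_i + (#B_i choose 2)`. -/
def T (A : ToricCluster r) (i : Fin r) : ℤ :=
  3 - ((A.Aset i).card : ℤ) - 2 * ((A.Bset i).card : ℤ)
    + (((A.Bset i).card.choose 2 : ℕ) : ℤ)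

/-- The nodes to which `i` is proximate, of smaller index: the sums in the recursive
definitions of the numerical data range over the nodes to which `i` is proximate,
which are ancestors of `i` and hence have smaller index (making the recursion
well-founded). -/
def anteSet (A : ToricCluster r) (i : Fin r) : Finset (Fin r) :=
  univ.filter (fun j => (j : ℕ) < (i : ℕ) ∧ Prox A.toToricConstellation i j)

/-- The numerical datum `N_i := m_i + Σ_{j : i→j} N_j`. -/
def N (A : ToricCluster r) (i : Fin r) : ℤ :=
  A.m i + ∑ j ∈ (A.anteSet i).attach, N A j.1
termination_by (i : ℕ)
decreasing_by
  have hj := j.2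
  simp only [anteSet, Finset.mem_filter] at hj
  exact hj.2.1

/-- The numerical datum `ν_i := 3 + Σ_{j : i→j} (ν_j − 1)`. -/
def nu (A : ToricCluster r) (i : Fin r) : ℤ :=
  3 + ∑ j ∈ (A.anteSet i).attach, (nu A j.1 - 1)
termination_by (i : ℕ)
decreasing_by
  have hj := j.2
  simp only [anteSet, Finset.mem_filter] at hj
  exact hj.2.1

end ToricCluster



/-! ### Auxiliary development for Statement 3 -/

section Aux

namespace ToricConstellation

variable {r : ℕ}

/-- Strong induction on node index. -/
lemma node_ind {P : Fin r → Prop}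
    (h : ∀ j : Fin r, (∀ j' : Fin r, (j' : ℕ) < (j : ℕ) → P j') → P j) :
    ∀ j, P j := by
  have key : ∀ n (j : Fin r), (j : ℕ) = n → P j := by
    intro n
    induction n using Nat.strong_induction_on with
    | _ n ih =>
      intro j hn
      subst hn
      exact h j (fun j' hj' => ih _ hj' j' rfl)
  exact fun j => key _ j rfl

/-- Strong induction downward on node index. -/
lemma node_ind_down {P : Fin r → Prop}
    (h : ∀ p : Fin r, (∀ q : Fin r, (p : ℕ) < (q : ℕ) → P q) → P p) :
    ∀ p, P p := by
  have key : ∀ n (p : Fin r), r - (p : ℕ) = n → P p := by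
    intro n
    induction n using Nat.strong_induction_on with
    | _ n ih =>
      intro p hn
      subst hn
      refine h p (fun q hq => ih (r - (q : ℕ)) ?_ q rfl)
      have := q.2; have := p.2; omega
  exact fun p => key _ p rfl

variable (C : ToricConstellation r)

lemma cone_zero (i : Fin r) (h : ¬ 0 < (i : ℕ)) :
    C.cone i = fun a => Pi.single a 1 := by
  rw [cone]; simp [h]

lemma cone_pos (i : Fin r) (h : 0 < (i : ℕ)) :
    C.cone i = Function.update (C.cone (C.parent i)) (C.label i)
      (∑ a, C.cone (C.parent i) a) := by
  rw [cone]; simp [h]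

lemma cone_label (i : Fin r) (h : 0 < (i : ℕ)) :
    C.cone i (C.label i) = C.v (C.parent i) := by
  rw [cone_pos C i h, v, Function.update_self]

lemma cone_ne_label (i : Fin r) (h : 0 < (i : ℕ)) (s : Fin 3) (hs : s ≠ C.label i) :
    C.cone i s = C.cone (C.parent i) s := by
  rw [cone_pos C i h, Function.update_of_ne hs]


/-- Coordinates of a vector `x` in the (unimodular) basis `cone C j`. -/
def coeff (C : ToricConstellation r) (j : Fin r) (x : Fin 3 → ℤ) (t : Fin 3) : ℤ :=
  if h : 0 < (j : ℕ) then
    if t = C.label j then coeff C (C.parent j) x t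
    else coeff C (C.parent j) x t - coeff C (C.parent j) x (C.label j)
  else x t
termination_by (j : ℕ)
decreasing_by all_goals exact C.parent_lt j h

variable (C : ToricConstellation r)

lemma coeff_root (j : Fin r) (h : ¬ 0 < (j : ℕ)) (x : Fin 3 → ℤ) (t : Fin 3) :
    C.coeff j x t = x t := by
  rw [coeff]; simp [h]

lemma coeff_pos_eq (j : Fin r) (h : 0 < (j : ℕ)) (x : Fin 3 → ℤ) (t : Fin 3)
    (ht : t = C.label j) : C.coeff j x t = C.coeff (C.parent j) x t := by
  rw [coeff]; simp [h, ht]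

lemma coeff_pos_ne (j : Fin r) (h : 0 < (j : ℕ)) (x : Fin 3 → ℤ) (t : Fin 3)
    (ht : t ≠ C.label j) :
    C.coeff j x t = C.coeff (C.parent j) x t - C.coeff (C.parent j) x (C.label j) := by
  rw [coeff]; simp [h, ht]

lemma coeff_add : ∀ (j : Fin r) (x y : Fin 3 → ℤ) (t : Fin 3),
    C.coeff j (x + y) t = C.coeff j x t + C.coeff j y t := by
  refine node_ind (fun j ih => ?_)
  intro x y t
  by_cases h : 0 < (j : ℕ)
  · have hp := C.parent_lt j h
    by_cases ht : t = C.label j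
    · rw [C.coeff_pos_eq j h _ t ht, C.coeff_pos_eq j h _ t ht,
        C.coeff_pos_eq j h _ t ht, ih _ hp]
    · rw [C.coeff_pos_ne j h _ t ht, C.coeff_pos_ne j h _ t ht,
        C.coeff_pos_ne j h _ t ht, ih _ hp, ih _ hp]
      ring
  · rw [C.coeff_root j h, C.coeff_root j h, C.coeff_root j h, Pi.add_apply]

lemma coeff_zero_fn : ∀ (j : Fin r) (t : Fin 3), C.coeff j (0 : Fin 3 → ℤ) t = 0 := by
  refine node_ind (fun j ih => ?_)
  intro t
  by_cases h : 0 < (j : ℕ)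
  · have hp := C.parent_lt j h
    by_cases ht : t = C.label j
    · rw [C.coeff_pos_eq j h _ t ht, ih _ hp]
    · rw [C.coeff_pos_ne j h _ t ht, ih _ hp, ih _ hp]; ring
  · rw [C.coeff_root j h]; rfl

lemma coeff_sum {α : Type*} (j : Fin r) (S : Finset α) (f : α → Fin 3 → ℤ) (t : Fin 3) :
    C.coeff j (∑ s ∈ S, f s) t = ∑ s ∈ S, C.coeff j (f s) t := by
  classical
  induction S using Finset.induction with
  | empty => simp [coeff_zero_fn]
  | insert _ _ h ih => rw [Finset.sum_insert h, Finset.sum_insert h, coeff_add, ih]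

lemma coeff_cone : ∀ (j : Fin r) (s t : Fin 3),
    C.coeff j (C.cone j s) t = if s = t then 1 else 0 := by
  refine node_ind (fun j ih => ?_)
  intro s t
  by_cases h : 0 < (j : ℕ)
  · have hp := C.parent_lt j h
    have hv : ∀ u : Fin 3, C.coeff (C.parent j) (C.v (C.parent j)) u = 1 := by
      intro u
      rw [v, coeff_sum]
      have : ∀ w : Fin 3, C.coeff (C.parent j) (C.cone (C.parent j) w) u
          = if w = u then 1 else 0 := fun w => ih _ hp w u
      rw [Finset.sum_congr rfl (fun w _ => this w), Finset.sum_ite_eq' Finset.univ u]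
      simp
    by_cases hs : s = C.label j
    · rw [hs, C.cone_label j h]
      by_cases ht : t = C.label j
      · rw [C.coeff_pos_eq j h _ t ht, hv t]
        simp [ht]
      · rw [C.coeff_pos_ne j h _ t ht, hv t, hv (C.label j)]
        have hne : C.label j ≠ t := fun hh => ht hh.symm
        simp [hne]
    · rw [C.cone_ne_label j h s hs]
      by_cases ht : t = C.label j
      · rw [C.coeff_pos_eq j h _ t ht, ih _ hp]
      · rw [C.coeff_pos_ne j h _ t ht, ih _ hp, ih _ hp]
        simp [hs]
  · rw [C.coeff_root j h, C.cone_zero j h]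
    simp [Pi.single_apply, eq_comm]

lemma coeff_v_self (p : Fin r) (t : Fin 3) : C.coeff p (C.v p) t = 1 := by
  rw [v, coeff_sum]
  have : ∀ w : Fin 3, C.coeff p (C.cone p w) t = if w = t then 1 else 0 := by
    intro w; rw [coeff_cone]
  rw [Finset.sum_congr rfl (fun w _ => this w), Finset.sum_ite_eq' Finset.univ t]
  simp

/- basic `anc` lemmas -/

lemma anc_self (q : Fin r) : C.anc q q = true := by
  rw [anc]; simp

lemma anc_zero (q j : Fin r) (h : ¬ 0 < (j : ℕ)) : C.anc q j = true ↔ q = j := by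
  rw [anc]; simp [h]

lemma anc_succ (q j : Fin r) (h : 0 < (j : ℕ)) :
    C.anc q j = true ↔ q = j ∨ C.anc q (C.parent j) = true := by
  rw [anc]; simp [h]

lemma anc_le : ∀ (j q : Fin r), C.anc q j = true → (q : ℕ) ≤ (j : ℕ) := by
  refine node_ind (fun j ih => ?_)
  intro q hq
  by_cases h : 0 < (j : ℕ)
  · rcases (C.anc_succ q j h).1 hq with rfl | hq'
    · exact le_rfl
    · exact le_trans (ih _ (C.parent_lt j h) q hq') (le_of_lt (C.parent_lt j h))
  · rw [(C.anc_zero q j h).1 hq]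

lemma anc_root : ∀ (p q : Fin r), ¬ 0 < (q : ℕ) → C.anc q p = true := by
  refine node_ind (fun p ih => ?_)
  intro q hq
  by_cases h : 0 < (p : ℕ)
  · exact (C.anc_succ q p h).2 (Or.inr (ih _ (C.parent_lt p h) q hq))
  · have : q = p := Fin.ext (by omega)
    exact this ▸ C.anc_self q

lemma anc_step : ∀ (p q' : Fin r), C.anc q' p = true → q' ≠ p →
    ∃ q'' : Fin r, 0 < (q'' : ℕ) ∧ C.parent q'' = q' ∧ C.anc q'' p = true := by
  refine node_ind (fun p ih => ?_)
  intro q' hanc hne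
  by_cases h : 0 < (p : ℕ)
  · rcases (C.anc_succ q' p h).1 hanc with rfl | hq'
    · exact absurd rfl hne
    · by_cases hqp : q' = C.parent p
      · exact ⟨p, h, hqp.symm, C.anc_self p⟩
      · obtain ⟨q'', h1, h2, h3⟩ := ih _ (C.parent_lt p h) q' hq' hqp
        exact ⟨q'', h1, h2, (C.anc_succ q'' p h).2 (Or.inr h3)⟩
  · exact absurd ((C.anc_zero q' p h).1 hanc) hne

/- nonnegativity / positivity -/

lemma cone_nonneg : ∀ (j : Fin r) (s t : Fin 3), 0 ≤ C.cone j s t := by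
  refine node_ind (fun j ih => ?_)
  intro s t
  by_cases h : 0 < (j : ℕ)
  · have hp := C.parent_lt j h
    by_cases hs : s = C.label j
    · rw [hs, C.cone_label j h, v, Finset.sum_apply]
      exact Finset.sum_nonneg (fun u _ => ih _ hp u t)
    · rw [C.cone_ne_label j h s hs]; exact ih _ hp s t
  · rw [C.cone_zero j h]
    simp only [Pi.single_apply]
    split <;> norm_num

lemma cone_sum_pos : ∀ (j : Fin r) (s : Fin 3), 1 ≤ ∑ t, C.cone j s t := by
  refine node_ind (fun j ih => ?_)
  intro s
  by_cases h : 0 < (j : ℕ)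
  · have hp := C.parent_lt j h
    by_cases hs : s = C.label j
    · have : ∀ t : Fin 3, C.cone j s t = ∑ u, C.cone (C.parent j) u t := by
        intro t
        rw [hs, C.cone_label j h, v, Finset.sum_apply]
      rw [Finset.sum_congr rfl (fun t _ => this t), Finset.sum_comm]
      have h1 : ∀ u : Fin 3, (1 : ℤ) ≤ ∑ t, C.cone (C.parent j) u t :=
        fun u => ih _ hp u
      calc (1 : ℤ) ≤ ∑ _u : Fin 3, (1 : ℤ) := by simp
        _ ≤ ∑ u, ∑ t, C.cone (C.parent j) u t :=
            Finset.sum_le_sum (fun u _ => h1 u)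
    · have : ∀ t : Fin 3, C.cone j s t = C.cone (C.parent j) s t := by
        intro t; rw [C.cone_ne_label j h s hs]
      rw [Finset.sum_congr rfl (fun t _ => this t)]
      exact ih _ hp s
  · rw [C.cone_zero j h]
    simp [Pi.single_apply]

lemma v_sum_ge3 (p : Fin r) : 3 ≤ ∑ t, C.v p t := by
  have : ∀ t : Fin 3, C.v p t = ∑ u, C.cone p u t := by
    intro t; rw [v, Finset.sum_apply]
  rw [Finset.sum_congr rfl (fun t _ => this t), Finset.sum_comm]
  calc (3 : ℤ) = ∑ _u : Fin 3, (1 : ℤ) := by simp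
    _ ≤ ∑ u, ∑ t, C.cone p u t := Finset.sum_le_sum (fun u _ => C.cone_sum_pos p u)

lemma v_ne_single (p : Fin r) (s : Fin 3) : C.v p ≠ Pi.single s 1 := by
  intro hcontra
  have h2 : ∑ t, C.v p t = 1 := by
    rw [hcontra]
    simp [Pi.single_apply]
  have := C.v_sum_ge3 p
  omega

/- coefficients along ancestors -/

lemma coeff_cone_anc_nonneg : ∀ (p q : Fin r) (s t : Fin 3), C.anc q p = true →
    0 ≤ C.coeff q (C.cone p s) t := by
  refine node_ind (fun p ih => ?_)
  intro q s t hanc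
  by_cases hq : q = p
  · subst hq; rw [coeff_cone]; split <;> norm_num
  · have hp : 0 < (p : ℕ) := by
      by_contra h
      exact hq ((C.anc_zero q p h).1 hanc)
    have hanc' : C.anc q (C.parent p) = true := by
      rcases (C.anc_succ q p hp).1 hanc with rfl | h
      · exact absurd rfl hq
      · exact h
    have hpar := C.parent_lt p hp
    by_cases hs : s = C.label p
    · rw [hs, C.cone_label p hp, v, coeff_sum]
      exact Finset.sum_nonneg (fun u _ => ih _ hpar q u t hanc')
    · rw [C.cone_ne_label p hp s hs]
      exact ih _ hpar q s t hanc'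

lemma coeff_cone_anc_sum_pos : ∀ (p q : Fin r) (s : Fin 3), C.anc q p = true →
    1 ≤ ∑ t, C.coeff q (C.cone p s) t := by
  refine node_ind (fun p ih => ?_)
  intro q s hanc
  by_cases hq : q = p
  · subst hq
    have : ∀ t : Fin 3, C.coeff q (C.cone q s) t = if s = t then 1 else 0 :=
      fun t => C.coeff_cone q s t
    rw [Finset.sum_congr rfl (fun t _ => this t), Finset.sum_ite_eq Finset.univ s]
    simp
  · have hp : 0 < (p : ℕ) := by
      by_contra h
      exact hq ((C.anc_zero q p h).1 hanc)
    have hanc' : C.anc q (C.parent p) = true := by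
      rcases (C.anc_succ q p hp).1 hanc with rfl | h
      · exact absurd rfl hq
      · exact h
    have hpar := C.parent_lt p hp
    by_cases hs : s = C.label p
    · have : ∀ t : Fin 3, C.coeff q (C.cone p s) t
          = ∑ u, C.coeff q (C.cone (C.parent p) u) t := by
        intro t
        rw [hs, C.cone_label p hp, v, coeff_sum]
      rw [Finset.sum_congr rfl (fun t _ => this t), Finset.sum_comm]
      calc (1 : ℤ) ≤ ∑ _u : Fin 3, (1 : ℤ) := by simp
        _ ≤ ∑ u, ∑ t, C.coeff q (C.cone (C.parent p) u) t :=
            Finset.sum_le_sum (fun u _ => ih _ hpar q u hanc')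
    · have : ∀ t : Fin 3, C.coeff q (C.cone p s) t
          = C.coeff q (C.cone (C.parent p) s) t := by
        intro t; rw [C.cone_ne_label p hp s hs]
      rw [Finset.sum_congr rfl (fun t _ => this t)]
      exact ih _ hpar q s hanc'

/-- Expansion of `coeff q (v p)` in terms of the parent of `p`. -/
lemma coeff_v_expand (p q : Fin r) (hp : 0 < (p : ℕ)) (t : Fin 3) :
    C.coeff q (C.v p) t = C.coeff q (C.v (C.parent p)) t
      + ∑ s ∈ Finset.univ.erase (C.label p), C.coeff q (C.cone (C.parent p) s) t := by
  rw [v, coeff_sum]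
  rw [← Finset.add_sum_erase Finset.univ _ (Finset.mem_univ (C.label p))]
  congr 1
  · rw [C.cone_label p hp]
  · refine Finset.sum_congr rfl (fun s hs => ?_)
    rw [C.cone_ne_label p hp s (Finset.ne_of_mem_erase hs)]

lemma coeff_v_anc_pos : ∀ (p q : Fin r) (t : Fin 3), C.anc q p = true →
    0 < C.coeff q (C.v p) t := by
  refine node_ind (fun p ih => ?_)
  intro q t hanc
  by_cases hq : q = p
  · subst hq; rw [coeff_v_self]; norm_num
  · have hp : 0 < (p : ℕ) := by
      by_contra h
      exact hq ((C.anc_zero q p h).1 hanc)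
    have hanc' : C.anc q (C.parent p) = true := by
      rcases (C.anc_succ q p hp).1 hanc with rfl | h
      · exact absurd rfl hq
      · exact h
    have hpar := C.parent_lt p hp
    rw [C.coeff_v_expand p q hp t]
    have h1 := ih _ hpar q t hanc'
    have h2 : 0 ≤ ∑ s ∈ Finset.univ.erase (C.label p),
        C.coeff q (C.cone (C.parent p) s) t :=
      Finset.sum_nonneg (fun s _ => C.coeff_cone_anc_nonneg _ q s t hanc')
    omega

lemma coeff_v_anc_sum_ge3 : ∀ (p q : Fin r), C.anc q p = true →
    3 ≤ ∑ t, C.coeff q (C.v p) t := by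
  refine node_ind (fun p ih => ?_)
  intro q hanc
  by_cases hq : q = p
  · subst hq
    have : ∀ t : Fin 3, C.coeff q (C.v q) t = 1 := fun t => C.coeff_v_self q t
    rw [Finset.sum_congr rfl (fun t _ => this t)]
    simp
  · have hp : 0 < (p : ℕ) := by
      by_contra h
      exact hq ((C.anc_zero q p h).1 hanc)
    have hanc' : C.anc q (C.parent p) = true := by
      rcases (C.anc_succ q p hp).1 hanc with rfl | h
      · exact absurd rfl hq
      · exact h
    have hpar := C.parent_lt p hp
    rw [Finset.sum_congr rfl (fun t _ => C.coeff_v_expand p q hp t),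
      Finset.sum_add_distrib]
    have h1 := ih _ hpar q hanc'
    have h2 : 0 ≤ ∑ t : Fin 3, ∑ s ∈ Finset.univ.erase (C.label p),
        C.coeff q (C.cone (C.parent p) s) t := by
      refine Finset.sum_nonneg (fun t _ => Finset.sum_nonneg (fun s _ => ?_))
      exact C.coeff_cone_anc_nonneg _ q s t hanc'
    omega

lemma coeff_v_anc_sum_gt (p q : Fin r) (hanc : C.anc q p = true) (hq : q ≠ p) :
    5 ≤ ∑ t, C.coeff q (C.v p) t := by
  have hp : 0 < (p : ℕ) := by
    by_contra h
    exact hq ((C.anc_zero q p h).1 hanc)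
  have hanc' : C.anc q (C.parent p) = true := by
    rcases (C.anc_succ q p hp).1 hanc with rfl | h
    · exact absurd rfl hq
    · exact h
  rw [Finset.sum_congr rfl (fun t _ => C.coeff_v_expand p q hp t),
    Finset.sum_add_distrib]
  have h1 := C.coeff_v_anc_sum_ge3 _ q hanc'
  have h2 : 2 ≤ ∑ t : Fin 3, ∑ s ∈ Finset.univ.erase (C.label p),
      C.coeff q (C.cone (C.parent p) s) t := by
    rw [Finset.sum_comm]
    have hcard : (Finset.univ.erase (C.label p)).card = 2 := by
      rw [Finset.card_erase_of_mem (Finset.mem_univ _)]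
      simp
    calc (2 : ℤ) = ∑ _s ∈ Finset.univ.erase (C.label p), (1 : ℤ) := by
          rw [Finset.sum_const, hcard]; norm_num
      _ ≤ _ := Finset.sum_le_sum
          (fun s _ => C.coeff_cone_anc_sum_pos _ q s hanc')
  omega

lemma pred_anc : ∀ (q p : Fin r), (∀ t, 0 < C.coeff q (C.v p) t) →
    C.anc q p = true := by
  refine node_ind (fun q ih => ?_)
  intro p hpred
  by_cases hq : 0 < (q : ℕ)
  · have hpar := C.parent_lt q hq
    have hlam : ∀ t, 0 < C.coeff (C.parent q) (C.v p) t := by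
      intro t
      by_cases ht : t = C.label q
      · have := hpred t
        rwa [C.coeff_pos_eq q hq _ t ht] at this
      · have h1 := hpred t
        rw [C.coeff_pos_ne q hq _ t ht] at h1
        have h2 := hpred (C.label q)
        rw [C.coeff_pos_eq q hq _ _ rfl] at h2
        omega
    have hancq' : C.anc (C.parent q) p = true := ih _ hpar p hlam
    by_cases hq'p : C.parent q = p
    · exfalso
      obtain ⟨t, ht⟩ : ∃ t : Fin 3, t ≠ C.label q := by
        have : ∀ b : Fin 3, ∃ t : Fin 3, t ≠ b := by decide
        exact this _
      have h1 := hpred t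
      rw [C.coeff_pos_ne q hq _ t ht, hq'p, C.coeff_v_self, C.coeff_v_self] at h1
      omega
    · obtain ⟨q'', hq''pos, hq''par, hq''anc⟩ :=
        C.anc_step p (C.parent q) hancq' hq'p
      by_cases hqq : q'' = q
      · subst hqq; exact hq''anc
      · exfalso
        have hsne : C.label q'' ≠ C.label q :=
          C.label_distinct q'' q hq''pos hq hqq hq''par
        have hpos'' := C.coeff_v_anc_pos p q'' (C.label q) hq''anc
        rw [C.coeff_pos_ne q'' hq''pos _ _ (fun h => hsne h.symm), hq''par]
          at hpos''
        have h1 := hpred (C.label q'')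
        rw [C.coeff_pos_ne q hq _ _ hsne] at h1
        omega
  · exact C.anc_root p q hq

lemma v_inj (p q : Fin r) (h : C.v p = C.v q) : p = q := by
  have h1 : C.anc q p = true := by
    refine C.pred_anc q p (fun t => ?_)
    rw [h, C.coeff_v_self]; norm_num
  have h2 : C.anc p q = true := by
    refine C.pred_anc p q (fun t => ?_)
    rw [← h, C.coeff_v_self]; norm_num
  exact Fin.ext (le_antisymm (C.anc_le q p h2) (C.anc_le p q h1))


/-! ### `reach`: nodes reachable from `p` along edges with labels in `S` -/

/-- `reach C S p j` : `j` is reachable from `p` along a (possibly empty) path of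
edges all of whose labels lie in `S`. -/
def reach (C : ToricConstellation r) (S : Finset (Fin 3)) (p : Fin r) (j : Fin r) :
    Bool :=
  decide (j = p) ||
    (if h : 0 < (j : ℕ) then
      decide (C.label j ∈ S) && reach C S p (C.parent j)
    else false)
termination_by (j : ℕ)
decreasing_by all_goals exact C.parent_lt j h

lemma reach_self (S : Finset (Fin 3)) (p : Fin r) : C.reach S p p = true := by
  rw [reach]; simp

lemma reach_zero (S : Finset (Fin 3)) (p j : Fin r) (h : ¬ 0 < (j : ℕ)) :
    C.reach S p j = true ↔ j = p := by
  rw [reach]; simp [h]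

lemma reach_succ (S : Finset (Fin 3)) (p j : Fin r) (h : 0 < (j : ℕ)) :
    C.reach S p j = true ↔
      j = p ∨ (C.label j ∈ S ∧ C.reach S p (C.parent j) = true) := by
  rw [reach]; simp [h]

lemma reach_anc (S : Finset (Fin 3)) (p : Fin r) :
    ∀ j, C.reach S p j = true → C.anc p j = true := by
  refine node_ind (fun j ih => ?_)
  intro hr
  by_cases h : 0 < (j : ℕ)
  · rcases (C.reach_succ S p j h).1 hr with rfl | ⟨_, hr'⟩
    · exact C.anc_self j
    · exact (C.anc_succ p j h).2 (Or.inr (ih _ (C.parent_lt j h) hr'))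
  · rw [(C.reach_zero S p j h).1 hr]; exact C.anc_self p

lemma reach_le (S : Finset (Fin 3)) (p j : Fin r) (hr : C.reach S p j = true) :
    (p : ℕ) ≤ (j : ℕ) :=
  C.anc_le j p (C.reach_anc S p j hr)

lemma reach_step (S : Finset (Fin 3)) (p : Fin r) :
    ∀ j, C.reach S p j = true → j ≠ p →
      ∃ q : Fin r, 0 < (q : ℕ) ∧ C.parent q = p ∧ C.label q ∈ S ∧
        C.reach S q j = true := by
  refine node_ind (fun j ih => ?_)
  intro hr hne
  have h : 0 < (j : ℕ) := by
    by_contra h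
    exact hne ((C.reach_zero S p j h).1 hr)
  rcases (C.reach_succ S p j h).1 hr with rfl | ⟨hmem, hr'⟩
  · exact absurd rfl hne
  · by_cases hpj : C.parent j = p
    · exact ⟨j, h, hpj, hmem, C.reach_self S j⟩
    · obtain ⟨q, h1, h2, h3, h4⟩ := ih _ (C.parent_lt j h) hr' hpj
      exact ⟨q, h1, h2, h3, (C.reach_succ S q j h).2 (Or.inr ⟨hmem, h4⟩)⟩

lemma reach_of_child (S : Finset (Fin 3)) (p q : Fin r) (hq : 0 < (q : ℕ))
    (hpar : C.parent q = p) (hmem : C.label q ∈ S) :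
    ∀ j, C.reach S q j = true → C.reach S p j = true := by
  refine node_ind (fun j ih => ?_)
  intro hr
  by_cases hjq : j = q
  · subst hjq
    exact (C.reach_succ S p j hq).2 (Or.inr ⟨hmem, hpar ▸ C.reach_self S p⟩)
  · have h : 0 < (j : ℕ) := by
      by_contra h
      exact hjq ((C.reach_zero S q j h).1 hr)
    rcases (C.reach_succ S q j h).1 hr with rfl | ⟨hmem', hr'⟩
    · exact absurd rfl hjq
    · exact (C.reach_succ S p j h).2
        (Or.inr ⟨hmem', ih _ (C.parent_lt j h) hr'⟩)

lemma anc_comparable : ∀ j q q' : Fin r, C.anc q j = true → C.anc q' j = true →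
    C.anc q q' = true ∨ C.anc q' q = true := by
  refine node_ind (fun j ih => ?_)
  intro q q' hq hq'
  by_cases h : 0 < (j : ℕ)
  · rcases (C.anc_succ q j h).1 hq with rfl | h1
    · right; exact hq'
    · rcases (C.anc_succ q' j h).1 hq' with rfl | h2
      · left; exact hq
      · exact ih _ (C.parent_lt j h) q q' h1 h2
  · rw [(C.anc_zero q j h).1 hq, (C.anc_zero q' j h).1 hq']
    left; exact C.anc_self j

lemma sibling_not_anc {q q' : Fin r} (hq : 0 < (q : ℕ)) (hq' : 0 < (q' : ℕ))
    (hpar : C.parent q = C.parent q') (hne : q ≠ q') :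
    C.anc q q' = true → False := by
  intro h
  rcases (C.anc_succ q q' hq').1 h with rfl | h'
  · exact hne rfl
  · have h1 := C.anc_le _ _ h'
    rw [← hpar] at h1
    have := C.parent_lt q hq
    omega

lemma reach_filters_disjoint {q q' : Fin r} (hq : 0 < (q : ℕ)) (hq' : 0 < (q' : ℕ))
    (hpar : C.parent q = C.parent q') (hne : q ≠ q') (S S' : Finset (Fin 3)) :
    Disjoint (Finset.univ.filter (fun j => C.reach S q j = true))
      (Finset.univ.filter (fun j => C.reach S' q' j = true)) := by
  rw [Finset.disjoint_left]
  intro j hj hj'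
  rw [Finset.mem_filter] at hj hj'
  have h1 := C.reach_anc S q j hj.2
  have h2 := C.reach_anc S' q' j hj'.2
  rcases C.anc_comparable j q q' h1 h2 with h | h
  · exact C.sibling_not_anc hq hq' hpar hne h
  · exact C.sibling_not_anc hq' hq hpar.symm (Ne.symm hne) h

/-- The children of `p` whose edge label lies in `S`. -/
def childF (C : ToricConstellation r) (S : Finset (Fin 3)) (p : Fin r) :
    Finset (Fin r) :=
  Finset.univ.filter (fun q => 0 < (q : ℕ) ∧ C.parent q = p ∧ C.label q ∈ S)

lemma mem_childF {S : Finset (Fin 3)} {p q : Fin r} :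
    q ∈ childF C S p ↔ 0 < (q : ℕ) ∧ C.parent q = p ∧ C.label q ∈ S := by
  rw [childF, Finset.mem_filter]
  simp

lemma childF_pairwise (S : Finset (Fin 3)) (p : Fin r) (S' : Finset (Fin 3)) :
    (↑(childF C S p) : Set (Fin r)).PairwiseDisjoint
      (fun q => Finset.univ.filter (fun j => C.reach S' q j = true)) := by
  intro q hq q' hq' hne
  rw [Finset.mem_coe, mem_childF] at hq hq'
  exact C.reach_filters_disjoint hq.1 hq'.1 (hq.2.1.trans hq'.2.1.symm) hne S' S'

/-- Decomposition of the set reached from `p` into `p` and the subtrees at the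
children of `p`. -/
lemma reach_set_decomp (S : Finset (Fin 3)) (p : Fin r) :
    (Finset.univ.filter (fun j => C.reach S p j = true)).erase p
      = (childF C S p).biUnion
          (fun q => Finset.univ.filter (fun j => C.reach S q j = true)) := by
  ext j
  rw [Finset.mem_erase, Finset.mem_filter, Finset.mem_biUnion]
  constructor
  · rintro ⟨hne, -, hr⟩
    obtain ⟨q, h1, h2, h3, h4⟩ := C.reach_step S p j hr hne
    exact ⟨q, (C.mem_childF).2 ⟨h1, h2, h3⟩, Finset.mem_filter.2 ⟨Finset.mem_univ _, h4⟩⟩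
  · rintro ⟨q, hq, hj⟩
    rw [mem_childF] at hq
    rw [Finset.mem_filter] at hj
    obtain ⟨hq0, hqpar, hqmem⟩ := hq
    have hr := C.reach_of_child S p q hq0 hqpar hqmem j hj.2
    have hlt : (p : ℕ) < (q : ℕ) := hqpar ▸ C.parent_lt q hq0
    have hle := C.reach_le S q j hj.2
    exact ⟨fun hc => by rw [hc] at hle; omega, Finset.mem_univ _, hr⟩

lemma sum_reach (S : Finset (Fin 3)) (p : Fin r) (f : Fin r → ℤ) :
    ∑ j ∈ Finset.univ.filter (fun j => C.reach S p j = true), f j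
      = f p + ∑ q ∈ childF C S p,
          ∑ j ∈ Finset.univ.filter (fun j => C.reach S q j = true), f j := by
  have hp : p ∈ Finset.univ.filter (fun j => C.reach S p j = true) :=
    Finset.mem_filter.2 ⟨Finset.mem_univ _, C.reach_self S p⟩
  rw [← Finset.add_sum_erase _ f hp, C.reach_set_decomp S p,
    Finset.sum_biUnion (C.childF_pairwise S p S)]

/- `inChain` analysis -/

lemma inChain_zero (p : Fin r) (x y : Fin 3) (j : Fin r) (h : ¬ 0 < (j : ℕ)) :
    C.inChain p x y j = false := by
  rw [inChain]; simp [h]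

lemma inChain_succ (p : Fin r) (x y : Fin 3) (j : Fin r) (h : 0 < (j : ℕ)) :
    C.inChain p x y j = true ↔
      (C.parent j = p ∧ C.label j = x) ∨
        (C.label j = y ∧ C.inChain p x y (C.parent j) = true) := by
  rw [inChain]; simp [h]

lemma inChain_iff (p : Fin r) (x y : Fin 3) :
    ∀ j, C.inChain p x y j = true ↔
      ∃ q : Fin r, q ∈ childF C {x} p ∧ C.reach {y} q j = true := by
  refine node_ind (fun j ih => ?_)
  constructor
  · intro hc
    have h : 0 < (j : ℕ) := by
      by_contra h
      rw [C.inChain_zero p x y j h] at hc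
      exact Bool.false_ne_true hc
    rcases (C.inChain_succ p x y j h).1 hc with ⟨h1, h2⟩ | ⟨h1, h2⟩
    · exact ⟨j, (C.mem_childF).2 ⟨h, h1, by simp [h2]⟩, C.reach_self _ j⟩
    · obtain ⟨q, hq, hr⟩ := ih _ (C.parent_lt j h) |>.1 h2
      exact ⟨q, hq, (C.reach_succ {y} q j h).2 (Or.inr ⟨by simp [h1], hr⟩)⟩
  · rintro ⟨q, hq, hr⟩
    rw [mem_childF] at hq
    obtain ⟨hq0, hqpar, hqmem⟩ := hq
    have hqlab : C.label q = x := by simpa using hqmem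
    by_cases hjq : j = q
    · subst hjq
      exact (C.inChain_succ p x y j hq0).2 (Or.inl ⟨hqpar, hqlab⟩)
    · have h : 0 < (j : ℕ) := by
        by_contra h
        exact hjq ((C.reach_zero {y} q j h).1 hr)
      rcases (C.reach_succ {y} q j h).1 hr with rfl | ⟨hmem', hr'⟩
      · exact absurd rfl hjq
      · have hjy : C.label j = y := by simpa using hmem'
        refine (C.inChain_succ p x y j h).2 (Or.inr ⟨hjy, ?_⟩)
        refine (ih _ (C.parent_lt j h)).2 ⟨q, ?_, hr'⟩
        exact (C.mem_childF).2 ⟨hq0, hqpar, hqmem⟩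


/-! ### Characterization of proximity when `i` has a unique child `k` -/

lemma cone_eq_v_imp (i k : Fin r)
    (huniq : ∀ q : Fin r, 0 < (q : ℕ) → C.parent q = i → q = k) :
    ∀ j s, C.cone j s = C.v i →
      s = C.label k ∧ C.reach (Finset.univ.erase (C.label k)) k j = true := by
  refine node_ind (fun j ih => ?_)
  intro s hs
  by_cases h : 0 < (j : ℕ)
  · by_cases hls : s = C.label j
    · rw [hls, C.cone_label j h] at hs
      have hpar : C.parent j = i := C.v_inj _ _ hs
      have hjk : j = k := huniq j h hpar
      subst hjk
      exact ⟨hls, C.reach_self _ j⟩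
    · rw [C.cone_ne_label j h s hls] at hs
      obtain ⟨h1, h2⟩ := ih _ (C.parent_lt j h) s hs
      refine ⟨h1, (C.reach_succ _ k j h).2 (Or.inr ⟨?_, h2⟩)⟩
      rw [Finset.mem_erase]
      exact ⟨fun hh => hls (h1 ▸ hh.symm), Finset.mem_univ _⟩
  · exfalso
    rw [C.cone_zero j h] at hs
    exact C.v_ne_single i s hs.symm

lemma reach_imp_cone (i k : Fin r) (hk0 : 0 < (k : ℕ)) (hkpar : C.parent k = i) :
    ∀ j, C.reach (Finset.univ.erase (C.label k)) k j = true →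
      C.cone j (C.label k) = C.v i := by
  refine node_ind (fun j ih => ?_)
  intro hr
  by_cases hjk : j = k
  · subst hjk
    rw [C.cone_label j hk0, hkpar]
  · have h : 0 < (j : ℕ) := by
      by_contra h
      exact hjk ((C.reach_zero _ k j h).1 hr)
    rcases (C.reach_succ _ k j h).1 hr with rfl | ⟨hmem, hr'⟩
    · exact absurd rfl hjk
    · have hne : C.label j ≠ C.label k := (Finset.mem_erase.1 hmem).1
      rw [C.cone_ne_label j h (C.label k) (fun hh => hne hh.symm)]
      exact ih _ (C.parent_lt j h) hr'

lemma prox_iff_reach (i k : Fin r) (hk0 : 0 < (k : ℕ)) (hkpar : C.parent k = i)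
    (huniq : ∀ q : Fin r, 0 < (q : ℕ) → C.parent q = i → q = k) (j : Fin r) :
    C.Prox j i ↔ C.reach (Finset.univ.erase (C.label k)) k j = true := by
  constructor
  · rintro ⟨-, s, hs⟩
    exact (C.cone_eq_v_imp i k huniq j s hs).2
  · intro hr
    have hik : (i : ℕ) < (k : ℕ) := hkpar ▸ C.parent_lt k hk0
    have hkj := C.reach_le _ k j hr
    refine ⟨fun hc => by rw [hc] at hkj; omega, C.label k, ?_⟩
    exact C.reach_imp_cone i k hk0 hkpar j hr

lemma childF_unique {x : Fin 3} {p q q' : Fin r}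
    (h : q ∈ childF C {x} p) (h' : q' ∈ childF C {x} p) : q = q' := by
  by_contra hne
  rw [mem_childF] at h h'
  refine C.label_distinct q q' h.1 h'.1 hne (h.2.1.trans h'.2.1.symm) ?_
  have e1 : C.label q = x := by simpa using h.2.2
  have e2 : C.label q' = x := by simpa using h'.2.2
  rw [e1, e2]

end ToricConstellation

/-! ### Cluster-level sums -/

open ToricConstellation

lemma fin3_tri : ∀ a : Fin 3, ∃ b c : Fin 3,
    a ≠ b ∧ a ≠ c ∧ b ≠ c ∧ ∀ x : Fin 3, x = a ∨ x = b ∨ x = c := by decide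

/-- Sum of squares of weights over the subtree reachable from `p` by `S`-labels. -/
def auxG {r : ℕ} (A : ToricCluster r) (S : Finset (Fin 3)) (p : Fin r) : ℤ :=
  ∑ j ∈ Finset.univ.filter (fun j => A.toToricConstellation.reach S p j = true),
    (A.m j) ^ 2

/-- Sum of weights over the ray from `p` in direction `y`. -/
def auxL {r : ℕ} (A : ToricCluster r) (y : Fin 3) (p : Fin r) : ℤ :=
  ∑ j ∈ Finset.univ.filter (fun j => A.toToricConstellation.reach {y} p j = true),
    A.m j

variable {r : ℕ}

lemma auxG_rec (A : ToricCluster r) (S : Finset (Fin 3)) (p : Fin r) :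
    auxG A S p = (A.m p) ^ 2
      + ∑ q ∈ childF A.toToricConstellation S p, auxG A S q :=
  A.toToricConstellation.sum_reach S p _

lemma auxL_rec (A : ToricCluster r) (y : Fin 3) (p : Fin r) :
    auxL A y p = A.m p
      + ∑ q ∈ childF A.toToricConstellation {y} p, auxL A y q :=
  A.toToricConstellation.sum_reach {y} p _

lemma auxL_nonneg (A : ToricCluster r) (y : Fin 3) (p : Fin r) : 0 ≤ auxL A y p :=
  Finset.sum_nonneg (fun j _ => (A.m_pos j).le)

lemma m_le_auxL (A : ToricCluster r) (y : Fin 3) (p : Fin r) :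
    A.m p ≤ auxL A y p :=
  Finset.single_le_sum (f := fun j => A.m j) (fun j _ => (A.m_pos j).le)
    (Finset.mem_filter.2 ⟨Finset.mem_univ _, A.toToricConstellation.reach_self {y} p⟩)

lemma M_nonneg (A : ToricCluster r) (p : Fin r) (x y : Fin 3) : 0 ≤ A.M p x y :=
  Finset.sum_nonneg (fun j _ => (A.m_pos j).le)

lemma M_eq_childF (A : ToricCluster r) (p : Fin r) (x y : Fin 3) :
    A.M p x y = ∑ q ∈ childF A.toToricConstellation {x} p, auxL A y q := by
  have hset : Finset.univ.filter
        (fun j => A.toToricConstellation.inChain p x y j = true)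
      = (childF A.toToricConstellation {x} p).biUnion
          (fun q => Finset.univ.filter
            (fun j => A.toToricConstellation.reach {y} q j = true)) := by
    ext j
    rw [Finset.mem_filter, Finset.mem_biUnion]
    constructor
    · rintro ⟨-, hc⟩
      obtain ⟨q, hq, hr⟩ := (A.toToricConstellation.inChain_iff p x y j).1 hc
      exact ⟨q, hq, Finset.mem_filter.2 ⟨Finset.mem_univ _, hr⟩⟩
    · rintro ⟨q, hq, hj⟩
      refine ⟨Finset.mem_univ _, (A.toToricConstellation.inChain_iff p x y j).2
        ⟨q, hq, (Finset.mem_filter.1 hj).2⟩⟩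
  calc A.M p x y
      = ∑ j ∈ Finset.univ.filter
          (fun j => A.toToricConstellation.inChain p x y j = true), A.m j := rfl
    _ = _ := by
        rw [hset, Finset.sum_biUnion
          (A.toToricConstellation.childF_pairwise {x} p {y})]
        rfl

/-- The key elementary inequality. -/
lemma numeric_core (mp mb mc Bb Bc Cb Cc : ℤ)
    (hmb1 : mb ≤ Bb) (hmb2 : mb ≤ Bc) (hmc1 : mc ≤ Cb) (hmc2 : mc ≤ Cc)
    (hBb : 0 ≤ Bb) (hBc : 0 ≤ Bc) (hCb : 0 ≤ Cb) (hCc : 0 ≤ Cc)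
    (hmb0 : 0 ≤ mb) (hmc0 : 0 ≤ mc)
    (hsum : Bc + Cb ≤ mp) :
    mb * max Bb Bc + mc * max Cb Cc ≤ mp * max Bb Cc := by
  have h1 : Bb ≤ max Bb Cc := le_max_left _ _
  have h2 : Cc ≤ max Bb Cc := le_max_right _ _
  have h0 : 0 ≤ max Bb Cc := le_trans hBb h1
  have hmbK : mb ≤ max Bb Cc := le_trans hmb1 h1
  have hmcK : mc ≤ max Bb Cc := le_trans hmc2 h2
  rcases max_cases Bb Bc with ⟨e1, l1⟩ | ⟨e1, l1⟩ <;>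
    rcases max_cases Cb Cc with ⟨e2, l2⟩ | ⟨e2, l2⟩ <;>
    rw [e1, e2] <;>
    nlinarith [mul_le_mul_of_nonneg_left h1 hmb0,
      mul_le_mul_of_nonneg_left h2 hmc0,
      mul_le_mul_of_nonneg_right hmbK hBc,
      mul_le_mul_of_nonneg_right hmcK hCb,
      mul_le_mul_of_nonneg_right hmb2 h0,
      mul_le_mul_of_nonneg_right hmc1 h0,
      mul_le_mul_of_nonneg_right hsum h0]

lemma branch_bound (A : ToricCluster r) (a b c : Fin 3) (p : Fin r) (x : Fin 3)
    (ih : ∀ q : Fin r, (p : ℕ) < (q : ℕ) →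
      auxG A (Finset.univ.erase a) q ≤ A.m q * max (auxL A b q) (auxL A c q)) :
    ∑ q ∈ childF A.toToricConstellation {x} p, auxG A (Finset.univ.erase a) q
      ≤ (∑ q ∈ childF A.toToricConstellation {x} p, A.m q) *
        max (∑ q ∈ childF A.toToricConstellation {x} p, auxL A b q)
            (∑ q ∈ childF A.toToricConstellation {x} p, auxL A c q) := by
  rcases Finset.eq_empty_or_nonempty (childF A.toToricConstellation {x} p) with
    h | ⟨q, hq⟩
  · rw [h]; simp
  · have hsing : childF A.toToricConstellation {x} p = {q} := by
      ext q'
      rw [Finset.mem_singleton]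
      exact ⟨fun h' => A.toToricConstellation.childF_unique h' hq,
        fun h' => h' ▸ hq⟩
    rw [hsing, Finset.sum_singleton, Finset.sum_singleton, Finset.sum_singleton,
      Finset.sum_singleton]
    have hmem := (A.toToricConstellation.mem_childF).1 hq
    have hlt : (p : ℕ) < (q : ℕ) :=
      hmem.2.1 ▸ A.toToricConstellation.parent_lt q hmem.1
    exact ih q hlt

lemma main_bound (A : ToricCluster r) (hA : A.Idealistic)
    (a b c : Fin 3) (hab : a ≠ b) (hac : a ≠ c) (hbc : b ≠ c)
    (htri : ∀ x : Fin 3, x = a ∨ x = b ∨ x = c) :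
    ∀ p : Fin r,
      auxG A (Finset.univ.erase a) p ≤ A.m p * max (auxL A b p) (auxL A c p) := by
  refine node_ind_down (fun p ih => ?_)
  classical
  have hsplit : childF A.toToricConstellation (Finset.univ.erase a) p
      = childF A.toToricConstellation {b} p ∪ childF A.toToricConstellation {c} p := by
    ext q
    rw [Finset.mem_union, mem_childF, mem_childF, mem_childF]
    constructor
    · rintro ⟨h1, h2, h3⟩
      rw [Finset.mem_erase] at h3
      rcases htri (A.toToricConstellation.label q) with he | he | he
      · exact absurd he h3.1
      · exact Or.inl ⟨h1, h2, by simp [he]⟩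
      · exact Or.inr ⟨h1, h2, by simp [he]⟩
    · rintro (⟨h1, h2, h3⟩ | ⟨h1, h2, h3⟩)
      · have : A.toToricConstellation.label q = b := by simpa using h3
        exact ⟨h1, h2, Finset.mem_erase.2 ⟨this ▸ (Ne.symm hab), Finset.mem_univ _⟩⟩
      · have : A.toToricConstellation.label q = c := by simpa using h3
        exact ⟨h1, h2, Finset.mem_erase.2 ⟨this ▸ (Ne.symm hac), Finset.mem_univ _⟩⟩
  have hdisj : Disjoint (childF A.toToricConstellation {b} p)
      (childF A.toToricConstellation {c} p) := by
    rw [Finset.disjoint_left]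
    intro q hqb hqc
    rw [mem_childF] at hqb hqc
    have e1 : A.toToricConstellation.label q = b := by simpa using hqb.2.2
    have e2 : A.toToricConstellation.label q = c := by simpa using hqc.2.2
    exact hbc (e1 ▸ e2 ▸ rfl)
  -- abbreviations
  have hGb := branch_bound A a b c p b ih
  have hGc := branch_bound A a b c p c ih
  have hid := hA p b c hbc
  rw [M_eq_childF, M_eq_childF] at hid
  have hmbBb : (∑ q ∈ childF A.toToricConstellation {b} p, A.m q)
      ≤ ∑ q ∈ childF A.toToricConstellation {b} p, auxL A b q :=
    Finset.sum_le_sum (fun q _ => m_le_auxL A b q)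
  have hmbBc : (∑ q ∈ childF A.toToricConstellation {b} p, A.m q)
      ≤ ∑ q ∈ childF A.toToricConstellation {b} p, auxL A c q :=
    Finset.sum_le_sum (fun q _ => m_le_auxL A c q)
  have hmcCb : (∑ q ∈ childF A.toToricConstellation {c} p, A.m q)
      ≤ ∑ q ∈ childF A.toToricConstellation {c} p, auxL A b q :=
    Finset.sum_le_sum (fun q _ => m_le_auxL A b q)
  have hmcCc : (∑ q ∈ childF A.toToricConstellation {c} p, A.m q)
      ≤ ∑ q ∈ childF A.toToricConstellation {c} p, auxL A c q :=
    Finset.sum_le_sum (fun q _ => m_le_auxL A c q)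
  have hBb0 : (0:ℤ) ≤ ∑ q ∈ childF A.toToricConstellation {b} p, auxL A b q :=
    Finset.sum_nonneg (fun q _ => auxL_nonneg A b q)
  have hBc0 : (0:ℤ) ≤ ∑ q ∈ childF A.toToricConstellation {b} p, auxL A c q :=
    Finset.sum_nonneg (fun q _ => auxL_nonneg A c q)
  have hCb0 : (0:ℤ) ≤ ∑ q ∈ childF A.toToricConstellation {c} p, auxL A b q :=
    Finset.sum_nonneg (fun q _ => auxL_nonneg A b q)
  have hCc0 : (0:ℤ) ≤ ∑ q ∈ childF A.toToricConstellation {c} p, auxL A c q :=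
    Finset.sum_nonneg (fun q _ => auxL_nonneg A c q)
  have hmb0 : (0:ℤ) ≤ ∑ q ∈ childF A.toToricConstellation {b} p, A.m q :=
    Finset.sum_nonneg (fun q _ => (A.m_pos q).le)
  have hmc0 : (0:ℤ) ≤ ∑ q ∈ childF A.toToricConstellation {c} p, A.m q :=
    Finset.sum_nonneg (fun q _ => (A.m_pos q).le)
  have hnum := numeric_core (A.m p)
    (∑ q ∈ childF A.toToricConstellation {b} p, A.m q)
    (∑ q ∈ childF A.toToricConstellation {c} p, A.m q)
    (∑ q ∈ childF A.toToricConstellation {b} p, auxL A b q)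
    (∑ q ∈ childF A.toToricConstellation {b} p, auxL A c q)
    (∑ q ∈ childF A.toToricConstellation {c} p, auxL A b q)
    (∑ q ∈ childF A.toToricConstellation {c} p, auxL A c q)
    hmbBb hmbBc hmcCb hmcCc hBb0 hBc0 hCb0 hCc0 hmb0 hmc0 hid
  rw [auxG_rec, hsplit, Finset.sum_union hdisj, auxL_rec A b p, auxL_rec A c p,
    max_add_add_left]
  nlinarith [hGb, hGc, hnum]

end Aux

open ToricConstellation ToricCluster

theorem stmt3 {r : ℕ} (A : ToricCluster r) (hA : A.Idealistic) (i k : Fin r)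
    (hk : Finset.univ.filter
        (fun j => IsChild A.toToricConstellation j i) = {k}) :
    ∑ j ∈ A.proxSet i, A.m j ^ 2 ≤ A.m i * A.m k := by
  classical
  have hkmem : k ∈ Finset.univ.filter
      (fun j => IsChild A.toToricConstellation j i) := by
    rw [hk]; exact Finset.mem_singleton_self k
  rw [Finset.mem_filter] at hkmem
  have hIs := hkmem.2
  unfold ToricConstellation.IsChild at hIs
  obtain ⟨hk0, hkpar⟩ := hIs
  have huniq : ∀ q : Fin r, 0 < (q : ℕ) →
      A.toToricConstellation.parent q = i → q = k := by
    intro q h1 h2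
    have hqmem : q ∈ Finset.univ.filter
        (fun j => IsChild A.toToricConstellation j i) := by
      refine Finset.mem_filter.2 ⟨Finset.mem_univ _, ?_⟩
      unfold ToricConstellation.IsChild
      exact ⟨h1, h2⟩
    rw [hk] at hqmem
    exact Finset.mem_singleton.1 hqmem
  obtain ⟨b, c, hab, hac, hbc, htri⟩ := fin3_tri (A.toToricConstellation.label k)
  have hprox : A.proxSet i = Finset.univ.filter
      (fun j => A.toToricConstellation.reach
        (Finset.univ.erase (A.toToricConstellation.label k)) k j = true) := by
    refine Finset.ext (fun j => ?_)
    simp only [ToricCluster.proxSet, Finset.mem_filter, Finset.mem_univ, true_and]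
    exact A.toToricConstellation.prox_iff_reach i k hk0 hkpar huniq j
  have hG : ∑ j ∈ A.proxSet i, A.m j ^ 2
      = auxG A (Finset.univ.erase (A.toToricConstellation.label k)) k := by
    rw [hprox]; rfl
  rw [hG]
  have hmain := main_bound A hA (A.toToricConstellation.label k) b c hab hac hbc
    htri k
  have hcf : childF A.toToricConstellation {A.toToricConstellation.label k} i
      = {k} := by
    ext q
    rw [Finset.mem_singleton, ToricConstellation.mem_childF]
    constructor
    · rintro ⟨h1, h2, h3⟩
      exact huniq q h1 h2
    · rintro rfl
      exact ⟨hk0, hkpar, by simp⟩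
  have hLb : auxL A b k ≤ A.m i := by
    have h1 := hA i (A.toToricConstellation.label k) b hab
    have h2 := M_nonneg A i b (A.toToricConstellation.label k)
    have h3 : A.M i (A.toToricConstellation.label k) b = auxL A b k := by
      rw [M_eq_childF, hcf, Finset.sum_singleton]
    linarith
  have hLc : auxL A c k ≤ A.m i := by
    have h1 := hA i (A.toToricConstellation.label k) c hac
    have h2 := M_nonneg A i c (A.toToricConstellation.label k)
    have h3 : A.M i (A.toToricConstellation.label k) c = auxL A c k := by
      rw [M_eq_childF, hcf, Finset.sum_singleton]
    linarith
  have hmax : max (auxL A b k) (auxL A c k) ≤ A.m i := max_le hLb hLc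
  calc auxG A (Finset.univ.erase (A.toToricConstellation.label k)) k
      ≤ A.m k * max (auxL A b k) (auxL A c k) := hmain
    _ ≤ A.m k * A.m i := mul_le_mul_of_nonneg_left hmax (A.m_pos k).le
    _ = A.m i * A.m k := mul_comm _ _
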